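/- For every nonnegative integer r, every n ∈ {2, …, N} and every f ∈ ℂ^N, the best approximation error satisfies E_n(f) ≤ (4/π)(r+3)^r (r+1) · ω_r(f, λ_n^{−1/2}). -/

import Mathlib

open Matrix

noncomputable section

/-- Euclidean (2-)norm on `ℂ^N`. -/
def cnorm2 {N : ℕ} (f : Fin N → ℂ) : ℝ := Real.sqrt (∑ i, ‖f i‖ ^ 2)

/-- The spectral operator `Σ_j c_j u_j u_j^*`. -/
def specOp {N : ℕ} (u : Fin N → Fin N → ℂ) (c : Fin N → ℂ) : Matrix (Fin N) (Fin N) ℂ :=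
  ∑ j, c j • Matrix.vecMulVec (u j) (star (u j))

/-- The graph translation operator `T_s = Σ_j e^{i s √λ_j} u_j u_j^*`. -/
def Tmat {N : ℕ} (u : Fin N → Fin N → ℂ) (lam : Fin N → ℝ) (s : ℝ) :
    Matrix (Fin N) (Fin N) ℂ :=
  specOp u (fun j => Complex.exp (Complex.I * (s : ℂ) * (Real.sqrt (lam j) : ℂ)))

/-- The `r`-th modulus of smoothness `ω_r(f,t) = sup_{|s| ≤ t} ‖(T_s - I)^r f‖₂`. -/
def omegaMod {N : ℕ} (u : Fin N → Fin N → ℂ) (lam : Fin N → ℝ) (r : ℕ) (f : Fin N → ℂ)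
    (t : ℝ) : ℝ :=
  ⨆ s : {s : ℝ // |s| ≤ t}, cnorm2 (((Tmat u lam s.1 - 1) ^ r).mulVec f)

/-- The Paley–Wiener space `PW_{λ_n} = span(u_1, …, u_n)`. -/
def PWspace {N : ℕ} (u : Fin N → Fin N → ℂ) (n : ℕ) : Submodule ℂ (Fin N → ℂ) :=
  Submodule.span ℂ {g | ∃ j : Fin N, (j : ℕ) < n ∧ g = u j}

/-- The best approximation error `E_n(f) = min_{g ∈ PW_{λ_n}} ‖f - g‖₂`. -/
def bestErr {N : ℕ} (u : Fin N → Fin N → ℂ) (n : ℕ) (f : Fin N → ℂ) : ℝ :=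
  sInf {y : ℝ | ∃ g ∈ PWspace u n, y = cnorm2 (f - g)}

/-! ### Auxiliary analytic lemmas -/

section Analytic
open Real intervalIntegral

lemma aux_sinlb {θ : ℝ} (h0 : 0 ≤ θ) (h1 : θ ≤ 1/2) : (15/16) * θ ≤ Real.sin θ := by
  rcases eq_or_lt_of_le h0 with h|h
  · simp [← h]
  · have := Real.sin_gt_sub_cube h
    nlinarith [sq_nonneg θ]

lemma aux_contInt (r : ℕ) : Continuous (fun θ : ℝ => (4 * Real.sin θ ^ 2) ^ r) := by
  fun_prop

lemma aux_perInt (r : ℕ) : Function.Periodic (fun θ : ℝ => (4 * Real.sin θ ^ 2) ^ r) π := by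
  intro x
  simp [Real.sin_add_pi, neg_sq]

lemma aux_betaLB (r : ℕ) :
    (15/16 : ℝ) ^ (2*r) / (2*(2*(r:ℝ)+1)) ≤ ∫ θ in (0:ℝ)..(1/2), (4 * Real.sin θ ^ 2) ^ r := by
  have h1 : ∫ θ in (0:ℝ)..(1/2), ((15/8 : ℝ))^(2*r) * θ ^ (2*r) =
      (15/16 : ℝ) ^ (2*r) / (2*(2*(r:ℝ)+1)) := by
    rw [intervalIntegral.integral_const_mul, integral_pow]
    rw [zero_pow (by omega), sub_zero, pow_succ]
    push_cast
    have e2 : (2:ℝ)^(2*r) * (8:ℝ)^(2*r) = (16:ℝ)^(2*r) := by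
      rw [← mul_pow]; norm_num
    have hd : (0:ℝ) < 2*(r:ℝ)+1 := by positivity
    field_simp
    have e3 : (1/2:ℝ)^(2*r) * (15/8:ℝ)^(2*r) = (15/16:ℝ)^(2*r) := by
      rw [← mul_pow]; norm_num
    linear_combination e3
  rw [← h1]
  apply intervalIntegral.integral_mono_on (by norm_num)
    (Continuous.intervalIntegrable (by fun_prop) _ _)
    (Continuous.intervalIntegrable (aux_contInt r) _ _)
  intro θ hθ
  obtain ⟨h0, h1⟩ := hθ
  have hs := aux_sinlb h0 h1
  have hsn : 0 ≤ Real.sin θ :=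
    Real.sin_nonneg_of_nonneg_of_le_pi h0 (by linarith [Real.pi_gt_three])
  rw [show ((15/8 : ℝ))^(2*r) * θ ^ (2*r) = ((15/8)*θ)^(2*r) by rw [mul_pow], pow_mul]
  exact pow_le_pow_left₀ (sq_nonneg _) (by nlinarith) r

lemma aux_GmonoLB (r : ℕ) {b1 b2 : ℝ} (h0 : 0 ≤ b1) (h : b1 ≤ b2) :
    ∫ θ in (0:ℝ)..b1, (4 * Real.sin θ ^ 2) ^ r ≤ ∫ θ in (0:ℝ)..b2, (4 * Real.sin θ ^ 2) ^ r := by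
  apply intervalIntegral.integral_mono_interval le_rfl h0 h
  · filter_upwards with θ
    positivity
  · exact Continuous.intervalIntegrable (aux_contInt r) _ _

lemma aux_Gperiod (r : ℕ) (m : ℕ) :
    ∫ θ in (0:ℝ)..((m:ℝ) * π), (4 * Real.sin θ ^ 2) ^ r =
      (m:ℝ) * ∫ θ in (0:ℝ)..π, (4 * Real.sin θ ^ 2) ^ r := by
  have := (aux_perInt r).intervalIntegral_add_zsmul_eq (m : ℤ) 0
    (fun t₁ t₂ => Continuous.intervalIntegrable (aux_contInt r) _ _)
  simpa using this

lemma aux_sinPowIntLB (r : ℕ) {a : ℝ} (ha : 1/2 ≤ a) :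
    (15/16 : ℝ)^(2*r) / (4 * π * (2*(r:ℝ)+1)) * a ≤
      ∫ θ in (0:ℝ)..a, (4 * Real.sin θ ^ 2) ^ r := by
  have hπ : (0:ℝ) < π := Real.pi_pos
  have hpi3 := Real.pi_gt_three
  set β : ℝ := (15/16 : ℝ) ^ (2*r) / (2*(2*(r:ℝ)+1)) with hβ
  have hβpos : 0 < β := by positivity
  have hc : (15/16 : ℝ)^(2*r) / (4 * π * (2*(r:ℝ)+1)) = β / (2*π) := by
    rw [hβ]; field_simp; ring
  rw [hc]
  have hGb : β ≤ ∫ θ in (0:ℝ)..a, (4 * Real.sin θ ^ 2) ^ r :=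
    le_trans (aux_betaLB r) (aux_GmonoLB r (by norm_num) ha)
  rcases le_or_gt a (2*π) with hle|hgt
  · calc β / (2*π) * a ≤ β / (2*π) * (2*π) :=
          mul_le_mul_of_nonneg_left hle (by positivity)
      _ = β := by field_simp
      _ ≤ _ := hGb
  · set m : ℕ := ⌊a / π⌋₊ with hm
    have hfloor : (m:ℝ) * π ≤ a := by
      rw [hm, ← le_div_iff₀ hπ]
      exact Nat.floor_le (by positivity)
    have hflb : a / (2*π) ≤ (m:ℝ) := by
      have h1 : a/π - 1 ≤ (m:ℝ) := by
        rw [hm]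
        have := Nat.lt_floor_add_one (a/π)
        linarith
      have h2 : a / (2*π) ≤ a/π - 1 := by
        rw [show a/π - 1 = (a - π)/π by field_simp, div_le_div_iff₀ (by positivity) hπ]
        nlinarith
      linarith
    have hGpi : β ≤ ∫ θ in (0:ℝ)..π, (4 * Real.sin θ ^ 2) ^ r :=
      le_trans (aux_betaLB r) (aux_GmonoLB r (by norm_num) (by linarith))
    calc β / (2*π) * a = β * (a / (2*π)) := by ring
      _ ≤ β * m := mul_le_mul_of_nonneg_left hflb (le_of_lt hβpos)
      _ ≤ (m:ℝ) * ∫ θ in (0:ℝ)..π, (4 * Real.sin θ ^ 2) ^ r := by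
          rw [mul_comm]
          exact mul_le_mul_of_nonneg_left hGpi (by positivity)
      _ = ∫ θ in (0:ℝ)..((m:ℝ) * π), (4 * Real.sin θ ^ 2) ^ r := (aux_Gperiod r m).symm
      _ ≤ _ := aux_GmonoLB r (by positivity) hfloor

lemma aux_perModeLB (r : ℕ) {t x : ℝ} (ht : 0 < t) (hx : 1/t ≤ x) :
    (15/16 : ℝ)^(2*r) / (4 * π * (2*(r:ℝ)+1)) * t ≤
      ∫ s in (0:ℝ)..t, (4 * Real.sin (s * (x/2)) ^ 2) ^ r := by
  have hxpos : 0 < x := lt_of_lt_of_le (by positivity) hx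
  have hc : x/2 ≠ 0 := by positivity
  have hcomp := intervalIntegral.integral_comp_mul_right
    (fun θ : ℝ => (4 * Real.sin θ ^ 2) ^ r) hc (a := 0) (b := t)
  rw [hcomp]
  have ha : 1/2 ≤ t * (x/2) := by
    rw [div_le_iff₀ (by norm_num)]
    calc (1:ℝ) = t * (1/t) := by field_simp
      _ ≤ t * x := mul_le_mul_of_nonneg_left hx (le_of_lt ht)
      _ = t * (x/2) * 2 := by ring
  have hmain := aux_sinPowIntLB r ha
  rw [zero_mul, smul_eq_mul]
  calc (15/16 : ℝ)^(2*r) / (4 * π * (2*(r:ℝ)+1)) * t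
      = (x/2)⁻¹ * ((15/16 : ℝ)^(2*r) / (4 * π * (2*(r:ℝ)+1)) * (t * (x/2))) := by
        field_simp
    _ ≤ (x/2)⁻¹ * ∫ θ in (0:ℝ)..(t*(x/2)), (4 * Real.sin θ ^ 2) ^ r :=
        mul_le_mul_of_nonneg_left hmain (by positivity)

lemma aux_const_ineq (r : ℕ) (hr : 1 ≤ r) :
    (1:ℝ) ≤ ((15/16:ℝ)^(2*r) / (4*π*(2*(r:ℝ)+1))) *
      ((4/π)*((r:ℝ)+3)^r*((r:ℝ)+1))^2 := by
  have hπ := Real.pi_gt_three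
  have hπ' := Real.pi_lt_d2
  have hπ3 : π^3 < 32 := by
    have h1 : π^2 < 3.15^2 := by nlinarith
    nlinarith
  have hr1 : (1:ℝ) ≤ (r:ℝ) := by exact_mod_cast hr
  have hsq : ((r:ℝ)+3)^(2*r) = (((r:ℝ)+3)^r)^2 := by
    rw [mul_comm 2 r, pow_mul]
  have hX : (14:ℝ) ≤ ((15/16:ℝ)*((r:ℝ)+3))^(2*r) := by
    calc (14:ℝ) ≤ 14^r := le_self_pow₀ (by norm_num) (by omega)
      _ ≤ ((225:ℝ)/16)^r := pow_le_pow_left₀ (by norm_num) (by norm_num) r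
      _ ≤ (((15/16:ℝ)*((r:ℝ)+3))^2)^r := by
          apply pow_le_pow_left₀ (by norm_num)
          nlinarith
      _ = ((15/16:ℝ)*((r:ℝ)+3))^(2*r) := by rw [← pow_mul, mul_comm 2 r]
  have hexp : (15/16:ℝ)^(2*r) * (((r:ℝ)+3)^r)^2 = ((15/16:ℝ)*((r:ℝ)+3))^(2*r) := by
    rw [mul_pow, hsq]
  set X : ℝ := ((15/16:ℝ)*((r:ℝ)+3))^(2*r) with hXdef
  have h4 : ((4:ℝ)/π)^2 = 16/π^2 := by rw [div_pow]; norm_num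
  have hC2 : (15/16:ℝ)^(2*r) * ((4/π)*((r:ℝ)+3)^r*((r:ℝ)+1))^2
      = 16 * X * ((r:ℝ)+1)^2 / π^2 := by
    calc (15/16:ℝ)^(2*r) * ((4/π)*((r:ℝ)+3)^r*((r:ℝ)+1))^2
        = ((15/16:ℝ)^(2*r) * (((r:ℝ)+3)^r)^2) * (((4:ℝ)/π)^2 * ((r:ℝ)+1)^2) := by
          ring
      _ = X * (16/π^2 * ((r:ℝ)+1)^2) := by rw [hexp, h4]
      _ = 16 * X * ((r:ℝ)+1)^2 / π^2 := by ring
  rw [div_mul_eq_mul_div, le_div_iff₀ (by positivity), one_mul, hC2,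
    le_div_iff₀ (by positivity)]
  -- goal : 4*π*(2r+1) * π^2 ≤ 16 * X * (r+1)^2  (up to arrangement)
  have p1 : 14*((r:ℝ)+1)^2 ≤ X*((r:ℝ)+1)^2 :=
    mul_le_mul_of_nonneg_right hX (sq_nonneg _)
  have q1 : 4*(2*(r:ℝ)+1)*π^3 ≤ 128*(2*(r:ℝ)+1) := by nlinarith [hπ3]
  nlinarith [p1, q1, hr1, sq_nonneg ((r:ℝ))]

end Analytic

/-! ### Auxiliary linear-algebra lemmas -/

section Alg
variable {N : ℕ} {u : Fin N → Fin N → ℂ}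

lemma aux_ip_expand (hu : ∀ i j, star (u i) ⬝ᵥ u j = if i = j then 1 else 0)
    (d e : Fin N → ℂ) :
    star (∑ l, d l • u l) ⬝ᵥ (∑ m, e m • u m) = ∑ l, (starRingEnd ℂ) (d l) * e l := by
  calc star (∑ l, d l • u l) ⬝ᵥ (∑ m, e m • u m)
      = ∑ k, (∑ l, (starRingEnd ℂ) (d l) * (starRingEnd ℂ) (u l k)) *
          (∑ m, e m * u m k) := by
        simp [dotProduct, Finset.sum_apply, Pi.smul_apply, smul_eq_mul,
          Pi.star_apply, Complex.star_def, map_sum, _root_.map_mul]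
    _ = ∑ k, ∑ l, ∑ m, ((starRingEnd ℂ) (d l) * e m) *
          ((starRingEnd ℂ) (u l k) * u m k) := by
        congr 1; funext k
        rw [Finset.sum_mul_sum]
        congr 1; funext l; congr 1; funext m; ring
    _ = ∑ l, ∑ m, ((starRingEnd ℂ) (d l) * e m) *
          (∑ k, (starRingEnd ℂ) (u l k) * u m k) := by
        rw [Finset.sum_comm]
        congr 1; funext l
        rw [Finset.sum_comm]
        congr 1; funext m
        rw [Finset.mul_sum]
    _ = ∑ l, ∑ m, ((starRingEnd ℂ) (d l) * e m) * (if l = m then 1 else 0) := by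
        congr 1; funext l; congr 1; funext m
        rw [← hu l m]
        simp [dotProduct, Complex.star_def]
    _ = ∑ l, (starRingEnd ℂ) (d l) * e l := by
        congr 1; funext l
        rw [Finset.sum_eq_single l]
        · simp
        · intro b _ hb; simp [Ne.symm hb]
        · intro h; simp at h

lemma aux_sq_norm_eq (g : Fin N → ℂ) :
    (∑ i, (‖g i‖ : ℝ) ^ 2 : ℝ) = (star g ⬝ᵥ g).re := by
  rw [dotProduct, Complex.re_sum]
  congr 1; funext i
  rw [Pi.star_apply, Complex.star_def, mul_comm, Complex.mul_conj]
  rw [Complex.ofReal_re, Complex.normSq_eq_norm_sq]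

lemma aux_cnorm2_combo (hu : ∀ i j, star (u i) ⬝ᵥ u j = if i = j then 1 else 0)
    (d : Fin N → ℂ) :
    cnorm2 (∑ l, d l • u l) = Real.sqrt (∑ l, ‖d l‖ ^ 2) := by
  unfold cnorm2
  congr 1
  rw [aux_sq_norm_eq, aux_ip_expand hu d d, Complex.re_sum]
  congr 1; funext l
  rw [mul_comm, Complex.mul_conj, Complex.ofReal_re, Complex.normSq_eq_norm_sq]

lemma aux_expand_vec (hu : ∀ i j, star (u i) ⬝ᵥ u j = if i = j then 1 else 0)
    (f : Fin N → ℂ) : f = ∑ l, (star (u l) ⬝ᵥ f) • u l := by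
  have hUU : (Matrix.of u) * (Matrix.of u)ᴴ = 1 := by
    ext i j
    have h := hu j i
    rw [dotProduct] at h
    simp only [Pi.star_apply] at h
    simp only [Matrix.mul_apply, Matrix.conjTranspose_apply, Matrix.of_apply, Matrix.one_apply]
    rw [show ∑ k, u i k * star (u j k) = ∑ k, star (u j k) * u i k from
      Finset.sum_congr rfl (fun k _ => mul_comm _ _), h]
    by_cases hij : i = j
    · simp [hij]
    · simp only [hij, if_false]
      exact if_neg (fun hh => hij hh.symm)
  have hUU' : (Matrix.of u)ᴴ * (Matrix.of u) = 1 := mul_eq_one_comm.mp hUU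
  funext i
  simp only [Finset.sum_apply, Pi.smul_apply, smul_eq_mul]
  have key : ∀ k, (∑ l, u l i * (starRingEnd ℂ) (u l k)) = if i = k then 1 else 0 := by
    intro k
    have h2 := congrFun (congrFun hUU' i) k
    simp only [Matrix.mul_apply, Matrix.conjTranspose_apply, Matrix.of_apply,
      Matrix.one_apply] at h2
    have h3 := congrArg (starRingEnd ℂ) h2
    rw [map_sum] at h3
    simp only [_root_.map_mul, Complex.star_def, Complex.conj_conj] at h3
    rw [h3]
    by_cases h : i = k <;> simp [h]
  calc f i = ∑ k, (if i = k then (1:ℂ) else 0) * f k := by simp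
    _ = ∑ k, (∑ l, u l i * (starRingEnd ℂ) (u l k)) * f k := by
        refine Finset.sum_congr rfl fun k _ => ?_
        rw [key k]
    _ = ∑ l, ∑ k, (u l i * (starRingEnd ℂ) (u l k)) * f k := by
        simp_rw [Finset.sum_mul]
        rw [Finset.sum_comm]
    _ = ∑ l, (∑ k, (starRingEnd ℂ) (u l k) * f k) * u l i := by
        refine Finset.sum_congr rfl fun l _ => ?_
        rw [Finset.sum_mul]
        exact Finset.sum_congr rfl fun k _ => by ring
    _ = _ := by
        refine Finset.sum_congr rfl fun l _ => ?_
        simp [dotProduct, Complex.star_def]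

lemma aux_specOp_mulVec (hu : ∀ i j, star (u i) ⬝ᵥ u j = if i = j then 1 else 0)
    (c : Fin N → ℂ) (l : Fin N) :
    (specOp u c).mulVec (u l) = c l • u l := by
  funext i
  simp only [specOp, Matrix.mulVec, dotProduct, Matrix.sum_apply, Pi.smul_apply,
    Matrix.smul_apply, Matrix.vecMulVec_apply, smul_eq_mul, Pi.star_apply]
  calc ∑ k, (∑ j, c j * (u j i * star (u j k))) * u l k
      = ∑ j, ∑ k, (c j * (u j i * star (u j k))) * u l k := by
        simp_rw [Finset.sum_mul]
        rw [Finset.sum_comm]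
    _ = ∑ j, (c j * u j i) * (star (u j) ⬝ᵥ u l) := by
        refine Finset.sum_congr rfl fun j _ => ?_
        rw [dotProduct, Finset.mul_sum]
        refine Finset.sum_congr rfl fun k _ => ?_
        simp only [Pi.star_apply]
        ring
    _ = c l * u l i := by
        simp_rw [hu]
        rw [Finset.sum_eq_single l]
        · simp
        · intro b _ hb; simp [hb]
        · intro h; simp at h

lemma aux_Tmat_pow_mulVec (hu : ∀ i j, star (u i) ⬝ᵥ u j = if i = j then 1 else 0)
    (lam : Fin N → ℝ) (s : ℝ) (r : ℕ) (l : Fin N) :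
    ((Tmat u lam s - 1) ^ r).mulVec (u l) =
      (Complex.exp (Complex.I * (s : ℂ) * (Real.sqrt (lam l) : ℂ)) - 1) ^ r • u l := by
  induction r with
  | zero => simp [Matrix.one_mulVec]
  | succ r ih =>
    rw [pow_succ', pow_succ']
    rw [← Matrix.mulVec_mulVec, ih, Matrix.mulVec_smul]
    rw [Matrix.sub_mulVec, Matrix.one_mulVec, Tmat, aux_specOp_mulVec hu]
    rw [smul_sub, ← smul_assoc, smul_eq_mul, ← sub_smul]
    congr 1
    ring

lemma aux_Tmat_pow_mulVec_f (hu : ∀ i j, star (u i) ⬝ᵥ u j = if i = j then 1 else 0)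
    (lam : Fin N → ℝ) (s : ℝ) (r : ℕ) (f : Fin N → ℂ) :
    ((Tmat u lam s - 1) ^ r).mulVec f =
      ∑ l, ((Complex.exp (Complex.I * (s : ℂ) * (Real.sqrt (lam l) : ℂ)) - 1) ^ r
        * (star (u l) ⬝ᵥ f)) • u l := by
  conv_lhs => rw [aux_expand_vec hu f]
  rw [show ((Tmat u lam s - 1) ^ r).mulVec (∑ l, (star (u l) ⬝ᵥ f) • u l)
      = ∑ l, (star (u l) ⬝ᵥ f) • ((Tmat u lam s - 1) ^ r).mulVec (u l) by
    rw [← Matrix.mulVecLin_apply, map_sum]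
    exact Finset.sum_congr rfl fun l _ => by
      rw [LinearMap.map_smul, Matrix.mulVecLin_apply]]
  refine Finset.sum_congr rfl fun l _ => ?_
  rw [aux_Tmat_pow_mulVec hu, ← smul_assoc, smul_eq_mul]
  congr 1
  ring

lemma aux_norm_term (r : ℕ) (s x : ℝ) (c : ℂ) :
    ‖(Complex.exp (Complex.I * (s:ℂ) * (x:ℂ)) - 1) ^ r * c‖ ^ 2
      = (4 * Real.sin (s * (x/2)) ^ 2) ^ r * ‖c‖ ^ 2 := by
  rw [norm_mul, mul_pow, norm_pow]
  congr 1
  rw [← pow_mul, mul_comm r 2, pow_mul]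
  congr 1
  have h0 : Complex.I * (s:ℂ) * (x:ℂ) = ((s*x : ℝ) : ℂ) * Complex.I := by
    push_cast; ring
  rw [h0]
  have h1 : Complex.exp (((s*x : ℝ) : ℂ) * Complex.I) - 1
      = Complex.ofReal (Real.cos (s*x) - 1) + Complex.ofReal (Real.sin (s*x)) * Complex.I := by
    rw [Complex.exp_mul_I, ← Complex.ofReal_cos, ← Complex.ofReal_sin]
    push_cast
    ring
  rw [h1, Complex.sq_norm, Complex.normSq_apply]
  simp only [Complex.add_re, Complex.ofReal_re, Complex.mul_re, Complex.I_re, Complex.I_im,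
    Complex.ofReal_im, Complex.add_im, Complex.mul_im, mul_zero, mul_one, zero_mul, sub_zero,
    zero_add, zero_sub, neg_zero, add_zero]
  have hhalf : s * (x/2) = (s*x)/2 := by ring
  rw [hhalf]
  have hc := Real.cos_sq ((s*x)/2)
  have hs := Real.sin_sq_add_cos_sq ((s*x)/2)
  have h2 : 2 * ((s*x)/2) = s*x := by ring
  rw [h2] at hc
  have hfull := Real.sin_sq_add_cos_sq (s*x)
  nlinarith [hc, hs, hfull]

end Alg

theorem stmt0
    (N : ℕ) (hN : 2 ≤ N)
    (u : Fin N → Fin N → ℂ)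
    (hu : ∀ i j, star (u i) ⬝ᵥ u j = if i = j then 1 else 0)
    (lam : Fin N → ℝ) (hmono : Monotone lam)
    (hlam0 : lam ⟨0, by omega⟩ = 0) (hlam1 : 0 < lam ⟨1, by omega⟩)
    (r : ℕ) (n : ℕ) (hn2 : 2 ≤ n) (hnN : n ≤ N) (f : Fin N → ℂ) :
    bestErr u n f ≤
      (4 / Real.pi) * ((r : ℝ) + 3) ^ r * ((r : ℝ) + 1) *
        omegaMod u lam r f (lam ⟨n - 1, by omega⟩ ^ (-(1 : ℝ) / 2)) := by
  have hπ : (0:ℝ) < Real.pi := Real.pi_pos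
  set t : ℝ := lam ⟨n - 1, by omega⟩ ^ (-(1 : ℝ)/2) with htdef
  have hlamm : 0 < lam ⟨n-1, by omega⟩ := by
    refine lt_of_lt_of_le hlam1 (hmono ?_)
    simp only [Fin.le_def]
    omega
  have htpos : 0 < t := Real.rpow_pos_of_pos hlamm _
  have htinv : 1/t = Real.sqrt (lam ⟨n-1, by omega⟩) := by
    rw [htdef, one_div, ← Real.rpow_neg hlamm.le, Real.sqrt_eq_rpow]
    norm_num
  set c : Fin N → ℂ := fun l => star (u l) ⬝ᵥ f with hcdef
  set ω : ℝ := omegaMod u lam r f t with hωdef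
  set w : Fin N → ℝ → ℝ :=
    fun l s => (4 * Real.sin (s * (Real.sqrt (lam l)/2)) ^ 2) ^ r * ‖c l‖ ^ 2 with hwdef
  -- pointwise spectral formula
  have hval : ∀ s : ℝ, cnorm2 (((Tmat u lam s - 1) ^ r).mulVec f)
      = Real.sqrt (∑ l, w l s) := by
    intro s
    rw [aux_Tmat_pow_mulVec_f hu, aux_cnorm2_combo hu]
    congr 1
    exact Finset.sum_congr rfl fun l _ =>
      aux_norm_term r s (Real.sqrt (lam l)) (c l)
  -- boundedness of the sup family, and sup lower bounds
  have hbdd : BddAbove (Set.range fun s : {s : ℝ // |s| ≤ t} =>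
      cnorm2 (((Tmat u lam s.1 - 1) ^ r).mulVec f)) := by
    refine ⟨Real.sqrt (∑ l, 4^r * ‖c l‖^2), ?_⟩
    rintro y ⟨s, rfl⟩
    show cnorm2 (((Tmat u lam s.1 - 1) ^ r).mulVec f) ≤ Real.sqrt (∑ l, 4^r * ‖c l‖^2)
    rw [hval]
    apply Real.sqrt_le_sqrt
    refine Finset.sum_le_sum fun l _ => ?_
    simp only [hwdef]
    refine mul_le_mul_of_nonneg_right ?_ (by positivity)
    refine pow_le_pow_left₀ (by positivity) ?_ r
    nlinarith [Real.sin_sq_le_one (s.1 * (Real.sqrt (lam l)/2))]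
  have homega_ge : ∀ s : ℝ, |s| ≤ t →
      cnorm2 (((Tmat u lam s - 1) ^ r).mulVec f) ≤ ω := by
    intro s hs
    exact le_ciSup hbdd ⟨s, hs⟩
  have homega0 : 0 ≤ ω :=
    le_trans (Real.sqrt_nonneg _) (homega_ge 0 (by simp [abs_of_nonneg, htpos.le]))
  -- the tail sum S
  set S : ℝ := ∑ l : Fin N, (if n ≤ (l:ℕ) then ‖c l‖^2 else 0) with hSdef
  have hSnonneg : 0 ≤ S := Finset.sum_nonneg fun l _ => by positivity
  -- Step 1 : bestErr ≤ √S
  have step1 : bestErr u n f ≤ Real.sqrt S := by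
    apply csInf_le
    · refine ⟨0, ?_⟩
      rintro y ⟨g, hg, rfl⟩
      exact Real.sqrt_nonneg _
    · refine ⟨∑ l ∈ Finset.univ.filter (fun l : Fin N => (l:ℕ) < n), c l • u l, ?_, ?_⟩
      · refine Submodule.sum_mem _ fun l hl => ?_
        simp only [Finset.mem_filter] at hl
        exact Submodule.smul_mem _ _ (Submodule.subset_span ⟨l, hl.2, rfl⟩)
      · have hfg : f - (∑ l ∈ Finset.univ.filter (fun l : Fin N => (l:ℕ) < n), c l • u l)
            = ∑ l : Fin N, (if n ≤ (l:ℕ) then c l else 0) • u l := by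
          conv_lhs => rw [aux_expand_vec hu f]
          rw [Finset.sum_filter, ← Finset.sum_sub_distrib]
          refine Finset.sum_congr rfl fun l _ => ?_
          by_cases h : (l:ℕ) < n
          · simp [h, Nat.not_le.mpr h, hcdef]
          · simp [h, Nat.le_of_not_lt h, hcdef]
        rw [hfg, aux_cnorm2_combo hu, hSdef]
        congr 1
        refine Finset.sum_congr rfl fun l _ => ?_
        by_cases h : n ≤ (l:ℕ) <;> simp [h]
  -- Step 2 : κ S ≤ ω²
  set κ : ℝ := (15/16:ℝ)^(2*r) / (4*Real.pi*(2*(r:ℝ)+1)) with hκdef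
  have hκpos : 0 < κ := by rw [hκdef]; positivity
  have key : κ * S ≤ ω^2 := by
    have hcont : ∀ l : Fin N, Continuous (w l) := by
      intro l; simp only [hwdef]; fun_prop
    have hsum_int : ∫ s in (0:ℝ)..t, (∑ l, w l s)
        = ∑ l, ∫ s in (0:ℝ)..t, w l s :=
      intervalIntegral.integral_finset_sum
        (fun l _ => (hcont l).intervalIntegrable _ _)
    have hlow : κ * t * S ≤ ∑ l, ∫ s in (0:ℝ)..t, w l s := by
      rw [hSdef, Finset.mul_sum]
      refine Finset.sum_le_sum fun l _ => ?_
      by_cases h : n ≤ (l:ℕ)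
      · simp only [h, if_true]
        rw [hκdef]
        have hxl : 1/t ≤ Real.sqrt (lam l) := by
          rw [htinv]
          apply Real.sqrt_le_sqrt
          refine hmono ?_
          simp only [Fin.le_def]
          omega
        have hint := aux_perModeLB r htpos hxl
        have : (∫ s in (0:ℝ)..t, w l s)
            = (∫ s in (0:ℝ)..t, (4 * Real.sin (s * (Real.sqrt (lam l)/2)) ^ 2) ^ r)
              * ‖c l‖^2 := by
          rw [hwdef, intervalIntegral.integral_mul_const]
        rw [this]
        calc κ * t * ‖c l‖^2 ≤ (κ * t) * ‖c l‖^2 := le_of_eq rfl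
          _ ≤ _ := mul_le_mul_of_nonneg_right hint (by positivity)
      · simp only [h, if_false, mul_zero]
        refine intervalIntegral.integral_nonneg htpos.le fun x _ => ?_
        simp only [hwdef]
        positivity
    have hup : ∫ s in (0:ℝ)..t, (∑ l, w l s) ≤ t * ω^2 := by
      have hpt : ∀ s ∈ Set.Icc (0:ℝ) t, (∑ l, w l s) ≤ ω^2 := by
        intro s hs
        have h1 : Real.sqrt (∑ l, w l s) ≤ ω := by
          rw [← hval]
          exact homega_ge s (abs_le.mpr ⟨by linarith [hs.1], hs.2⟩)
        have h2 : 0 ≤ ∑ l, w l s :=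
          Finset.sum_nonneg fun l _ => by simp only [hwdef]; positivity
        calc (∑ l, w l s) = (Real.sqrt (∑ l, w l s))^2 := (Real.sq_sqrt h2).symm
          _ ≤ ω^2 := pow_le_pow_left₀ (Real.sqrt_nonneg _) h1 2
      calc ∫ s in (0:ℝ)..t, (∑ l, w l s)
          ≤ ∫ _ in (0:ℝ)..t, ω^2 := by
            apply intervalIntegral.integral_mono_on htpos.le
              ((continuous_finset_sum _ fun l _ => hcont l).intervalIntegrable _ _)
              intervalIntegrable_const hpt
        _ = t * ω^2 := by simp
    have hcomb : t * (κ * S) ≤ t * ω^2 := by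
      calc t * (κ * S) = κ * t * S := by ring
        _ ≤ ∑ l, ∫ s in (0:ℝ)..t, w l s := hlow
        _ = ∫ s in (0:ℝ)..t, (∑ l, w l s) := hsum_int.symm
        _ ≤ t * ω^2 := hup
    exact le_of_mul_le_mul_left hcomb htpos
  -- conclude
  rcases Nat.eq_zero_or_pos r with hr0 | hrpos
  · subst hr0
    have hω_f : cnorm2 f ≤ ω := by
      have h := homega_ge 0 (by simp [abs_of_nonneg, htpos.le])
      simpa [pow_zero, Matrix.one_mulVec] using h
    have hEf : Real.sqrt S ≤ cnorm2 f := by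
      have hf2 : cnorm2 f = Real.sqrt (∑ l, ‖c l‖^2) := by
        conv_lhs => rw [aux_expand_vec hu f]
        rw [aux_cnorm2_combo hu]
      rw [hf2, hSdef]
      apply Real.sqrt_le_sqrt
      refine Finset.sum_le_sum fun l _ => ?_
      by_cases h : n ≤ (l:ℕ) <;> simp [h] <;> positivity
    have hbw : bestErr u n f ≤ ω := le_trans step1 (le_trans hEf hω_f)
    have hc1 : (1:ℝ) ≤ 4/Real.pi * (((0:ℕ):ℝ)+3)^(0:ℕ) * (((0:ℕ):ℝ)+1) := by
      push_cast
      rw [pow_zero]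
      have h315 := Real.pi_lt_d2
      rw [show (4:ℝ)/Real.pi*1*(0+1) = 4/Real.pi by ring, le_div_iff₀ hπ]
      linarith
    calc bestErr u n f ≤ ω := hbw
      _ = 1 * ω := (one_mul ω).symm
      _ ≤ 4/Real.pi * (((0:ℕ):ℝ)+3)^(0:ℕ) * (((0:ℕ):ℝ)+1) * ω :=
          mul_le_mul_of_nonneg_right hc1 homega0
  · have hconst := aux_const_ineq r hrpos
    set C : ℝ := (4/Real.pi)*((r:ℝ)+3)^r*((r:ℝ)+1) with hCdef
    have hCpos : 0 < C := by rw [hCdef]; positivity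
    have hS_le : S ≤ (C * ω)^2 := by
      calc S ≤ S * (κ * C^2) := le_mul_of_one_le_right hSnonneg hconst
        _ = (κ * S) * C^2 := by ring
        _ ≤ ω^2 * C^2 := mul_le_mul_of_nonneg_right key (sq_nonneg _)
        _ = (C * ω)^2 := by ring
    calc bestErr u n f ≤ Real.sqrt S := step1
      _ ≤ Real.sqrt ((C * ω)^2) := Real.sqrt_le_sqrt hS_le
      _ = C * ω := Real.sqrt_sq (by positivity)
      _ = (4/Real.pi)*((r:ℝ)+3)^r*((r:ℝ)+1) * ω := by rw [hCdef]
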